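/- Let g : ℝⁿ → ℝ be additive, periodic with respect to a basis u₁,...,uₙ of ℝⁿ (g(x+uₖ) = g(x) for all x, k), and suppose x ↦ exp(i·g(x)) is Lebesgue measurable on the parallelepiped generated by u₁,...,uₙ. Then g ≡ 0. -/

import Mathlib

open MeasureTheory

theorem stmt_7_aux {E : Type*} [NormedAddCommGroup E] [NormedSpace ℝ E]
    [MeasurableSpace E] [BorelSpace E] {ι : Type*} [Fintype ι]
    (b : Module.Basis ι ℝ E) (μ : Measure E) [μ.IsAddHaarMeasure]
    (g : E → ℝ)
    (hg : ∀ x y, g (x + y) = g x + g y)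
    (hper : ∀ (x : E) (k : ι), g (x + b k) = g x)
    (hmeas : AEMeasurable (fun x => Complex.exp (Complex.I * (g x : ℂ)))
      (μ.restrict (parallelepiped ⇑b))) :
    ∀ x, g x = 0 := by
  classical
  haveI : FiniteDimensional ℝ E := Module.Finite.of_basis b
  -- `g` as an additive monoid hom
  let G : E →+ ℝ := AddMonoidHom.mk' g hg
  have hGg : ∀ x, G x = g x := fun _ => rfl
  have hg00 : g 0 = 0 := by simpa [hGg] using (map_zero G)
  have hgb : ∀ k, g (b k) = 0 := by
    intro k
    have h := hper 0 k
    rwa [zero_add, hg00] at h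
  -- g vanishes on the rational multiples of basis vectors
  have hrat : ∀ (q : ℚ) (i : ι), g ((q : ℝ) • b i) = 0 := by
    intro q i
    have hd0 : ((q.den : ℕ) : ℝ) ≠ 0 := Nat.cast_ne_zero.mpr q.den_pos.ne'
    set w : E := ((q.den : ℝ))⁻¹ • b i with hw
    have hgw : g w = 0 := by
      have h1 : (q.den : ℕ) • w = b i := by
        rw [← Nat.cast_smul_eq_nsmul ℝ, hw, smul_inv_smul₀ hd0]
      have h2 : G ((q.den : ℕ) • w) = (q.den : ℕ) • G w := map_nsmul G q.den w
      rw [h1, hGg, hGg, nsmul_eq_mul, hgb i] at h2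
      exact (mul_eq_zero.mp h2.symm).resolve_left hd0
    have hq : (q : ℝ) • b i = q.num • w := by
      rw [← Int.cast_smul_eq_zsmul ℝ, hw, smul_smul, Rat.cast_def, div_eq_mul_inv]
    rw [hq]
    have h3 := map_zsmul G q.num w
    rw [hGg, hGg, hgw, zsmul_eq_mul, mul_zero] at h3
    exact h3
  -- g vanishes on the ℤ-span of the basis
  have hzspan : ∀ v ∈ Submodule.span ℤ (Set.range ⇑b), g v = 0 := by
    intro v hv
    induction hv using Submodule.span_induction with
    | mem x hx => obtain ⟨i, rfl⟩ := hx; exact hgb i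
    | zero => exact hg00
    | add x y _ _ hx hy => rw [hg, hx, hy, add_zero]
    | smul a x _ hx =>
        have h := map_zsmul G a x
        rw [hGg, hGg, hx, zsmul_eq_mul, mul_zero] at h
        exact h
  -- the character
  set χ : E → ℂ := fun x => Complex.exp (Complex.I * (g x : ℂ)) with hχ
  have hχmul : ∀ x y, χ (x + y) = χ x * χ y := by
    intro x y
    simp only [hχ, hg x y, Complex.ofReal_add, mul_add, Complex.exp_add]
  have hχnorm : ∀ x, ‖χ x‖ = 1 := by
    intro x
    simp [hχ, Complex.norm_exp]
  have hχinv : ∀ x, χ (-x) * χ x = 1 := by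
    intro x
    rw [← hχmul, neg_add_cancel]
    simp [hχ, hg00]
  -- an explicit formula for the fract map
  have hfloor : ∀ x : E, ((ZSpan.floor b x : E)) = ∑ i, (⌊b.repr x i⌋ : ℝ) • b i := by
    intro x
    rw [ZSpan.floor]
    push_cast
    refine Finset.sum_congr rfl fun i _ => ?_
    rw [← Int.cast_smul_eq_zsmul ℝ]
    norm_num
  have hfract : ∀ x : E, ZSpan.fract b x = x - ∑ i, (⌊b.repr x i⌋ : ℝ) • b i := by
    intro x
    rw [ZSpan.fract_apply, hfloor]
  -- measurability of χ on all of E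
  set D : Set E := ZSpan.fundamentalDomain b with hD
  have hmeasD : AEMeasurable χ (μ.restrict D) := by
    rw [hD, Measure.restrict_congr_set (ZSpan.fundamentalDomain_ae_parallelepiped b μ)]
    exact hmeas
  have hrepr_meas : ∀ i, Measurable (fun x : E => b.repr x i) := by
    intro i
    have : Continuous (fun x : E => b.repr x i) := by
      have := LinearMap.continuous_of_finiteDimensional (b.coord i)
      exact this
    exact this.measurable
  have hfract_meas : Measurable (ZSpan.fract b) := by
    have : ZSpan.fract b = fun x => x - ∑ i, (⌊b.repr x i⌋ : ℝ) • b i := funext hfract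
    rw [this]
    refine measurable_id.sub (Finset.measurable_sum _ fun i _ => ?_)
    have h1 : Measurable (fun x : E => ⌊b.repr x i⌋) := Int.measurable_floor.comp (hrepr_meas i)
    have h2 : Measurable (fun z : ℤ => ((z : ℝ) • b i : E)) := measurable_from_top
    exact h2.comp h1
  have hQMP : Measure.QuasiMeasurePreserving (ZSpan.fract b) μ (μ.restrict D) := by
    refine ⟨hfract_meas, ?_⟩
    refine Measure.AbsolutelyContinuous.mk fun s hs h0 => ?_
    rw [Measure.map_apply hfract_meas hs]
    rw [Measure.restrict_apply hs] at h0
    have hsub : (ZSpan.fract b) ⁻¹' s ⊆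
        ⋃ m : ι → ℤ, (fun y => y + (∑ i, ((m i : ℤ) : ℝ) • b i)) ⁻¹' (s ∩ D) := by
      intro x hx
      refine Set.mem_iUnion.2 ⟨fun i => -⌊b.repr x i⌋, ?_⟩
      have hxe : x + ∑ i, ((((-⌊b.repr x i⌋ : ℤ)) : ℝ)) • b i = ZSpan.fract b x := by
        rw [hfract]
        push_cast
        rw [sub_eq_add_neg, ← Finset.sum_neg_distrib]
        congr 1
        refine Finset.sum_congr rfl fun i _ => ?_
        rw [neg_smul]
      show x + ∑ i, ((((-⌊b.repr x i⌋ : ℤ)) : ℝ)) • b i ∈ s ∩ D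
      rw [hxe]
      exact ⟨hx, ZSpan.fract_mem_fundamentalDomain b x⟩
    refine measure_mono_null hsub (measure_iUnion_null fun m => ?_)
    rw [measure_preimage_add_right]
    exact h0
  have hfract_eq : ∀ x, χ (ZSpan.fract b x) = χ x := by
    intro x
    have hgf : g (ZSpan.fract b x) = g x := by
      have h1 : g x = g (ZSpan.fract b x) + g (ZSpan.floor b x) := by
        rw [← hg, ZSpan.fract_apply, sub_add_cancel]
      rw [h1, hzspan _ (SetLike.coe_mem (ZSpan.floor b x)), add_zero]
    simp only [hχ, hgf]
  have hmeasχ : AEMeasurable χ μ := by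
    have h := hmeasD.comp_quasiMeasurePreserving hQMP
    have heq : χ ∘ (ZSpan.fract b) = χ := funext fun x => hfract_eq x
    rwa [heq] at h
  have hsm : AEStronglyMeasurable χ μ := hmeasχ.aestronglyMeasurable
  -- local integrability
  have hloc : LocallyIntegrable χ μ := by
    rw [locallyIntegrable_iff]
    intro K hK
    exact Measure.integrableOn_of_bounded hK.measure_lt_top.ne hsm
      (ae_of_all _ fun x => (hχnorm x).le)
  -- the parallelepiped
  set P : Set E := parallelepiped ⇑b with hP
  have hPcompact : IsCompact P := by
    rw [hP, ← Module.Basis.coe_parallelepiped b]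
    exact b.parallelepiped.isCompact
  have hPpos : 0 < μ P := by
    rw [hP, ← Module.Basis.coe_parallelepiped b]
    exact Measure.measure_pos_of_nonempty_interior μ b.parallelepiped.interior_nonempty
  have hPfin : μ P < ⊤ := hPcompact.measure_lt_top
  set c : ℝ := (μ P).toReal with hc
  have hcpos : 0 < c := ENNReal.toReal_pos hPpos.ne' hPfin.ne
  -- the truncated character
  set k : E → ℂ := (-P).indicator χ with hk
  have hnegP : MeasurableSet (-P) := hPcompact.neg.isClosed.measurableSet
  have hkint : Integrable k μ := by
    rw [hk]
    refine (Measure.integrableOn_of_bounded ?_ hsm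
      (ae_of_all _ fun x => (hχnorm x).le)).integrable_indicator hnegP
    rw [Measure.measure_neg]
    exact hPfin.ne
  -- approximate k by a continuous compactly supported function
  obtain ⟨f, hfsupp, hfclose, hfcont, hfint⟩ :=
    hkint.exists_hasCompactSupport_integral_sub_le (ε := c / 2) (by positivity)
  set C : ℂ := ∫ u, χ (-u) * f u ∂μ with hC
  -- measurability of χ ∘ neg
  have hsmneg : AEStronglyMeasurable (fun u => χ (-u)) μ := by
    exact hsm.comp_quasiMeasurePreserving (Measure.measurePreserving_neg μ).quasiMeasurePreserving
  -- ∫ χ(-u) k u = c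
  have hCk : ∫ u, χ (-u) * k u ∂μ = (c : ℂ) := by
    have heq : ∀ u, χ (-u) * k u = (-P).indicator (fun _ => (1 : ℂ)) u := by
      intro u
      rw [hk]
      by_cases hu : u ∈ -P
      · simp only [Set.indicator_of_mem hu]
        exact hχinv u
      · simp [Set.indicator_of_notMem hu]
    rw [show (fun u => χ (-u) * k u) = (-P).indicator (fun _ => (1 : ℂ)) from funext heq]
    rw [integral_indicator hnegP, setIntegral_const, measureReal_def, Measure.measure_neg]
    simp [hc, Complex.real_smul]
  -- C is close to c
  have hCclose : ‖C - (c : ℂ)‖ ≤ c / 2 := by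
    have hint1 : Integrable (fun u => χ (-u) * k u) μ :=
      hkint.bdd_mul hsmneg (ae_of_all _ fun x => (hχnorm (-x)).le)
    have hint2 : Integrable (fun u => χ (-u) * f u) μ :=
      hfint.bdd_mul hsmneg (ae_of_all _ fun x => (hχnorm (-x)).le)
    rw [hC, ← hCk, ← integral_sub hint2 hint1]
    have hle : ‖∫ u, (χ (-u) * f u - χ (-u) * k u) ∂μ‖ ≤ ∫ u, ‖f u - k u‖ ∂μ := by
      refine le_trans (norm_integral_le_integral_norm _) (le_of_eq ?_)
      refine integral_congr_ae (ae_of_all _ fun u => ?_)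
      show ‖χ (-u) * f u - χ (-u) * k u‖ = ‖f u - k u‖
      rw [← mul_sub, norm_mul, hχnorm, one_mul]
    refine hle.trans ?_
    have : ∀ u, ‖f u - k u‖ = ‖k u - f u‖ := fun u => norm_sub_rev _ _
    rw [show (fun u => ‖f u - k u‖) = fun u => ‖k u - f u‖ from funext this]
    exact hfclose
  have hCne : C ≠ 0 := by
    intro h
    rw [h, zero_sub, norm_neg, Complex.norm_real, Real.norm_eq_abs,
      abs_of_pos hcpos] at hCclose
    linarith
  -- the convolution is continuous and equals χ y * C
  have hconv_cont : Continuous (convolution χ f (ContinuousLinearMap.mul ℝ ℂ) μ) :=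
    hfsupp.continuous_convolution_right _ hloc hfcont
  have hconv_eq : ∀ y, convolution χ f (ContinuousLinearMap.mul ℝ ℂ) μ y = χ y * C := by
    intro y
    rw [convolution_def]
    simp only [ContinuousLinearMap.mul_apply']
    rw [← integral_sub_left_eq_self (fun t => χ t * f (y - t)) μ y]
    have heq : ∀ t, χ (y - t) * f (y - (y - t)) = χ y * (χ (-t) * f t) := by
      intro t
      rw [sub_sub_cancel, sub_eq_add_neg, hχmul, mul_assoc]
    rw [show (fun t => χ (y - t) * f (y - (y - t))) = fun t => χ y * (χ (-t) * f t) from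
      funext heq]
    rw [integral_const_mul, hC]
  have hχcont : Continuous χ := by
    have heq : χ = fun y => convolution χ f (ContinuousLinearMap.mul ℝ ℂ) μ y * C⁻¹ := by
      funext y
      rw [hconv_eq y, mul_assoc, mul_inv_cancel₀ hCne, mul_one]
    rw [heq]
    exact hconv_cont.mul continuous_const
  -- g vanishes on a dense set
  have hdense : Dense {y : E | g y = 0} := by
    rw [Metric.dense_iff]
    intro x r hr
    set M : ℝ := ∑ i, ‖b i‖ with hM
    have hM0 : 0 ≤ M := Finset.sum_nonneg fun i _ => norm_nonneg _
    set δ : ℝ := r / (M + 1) with hδ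
    have hδ0 : 0 < δ := by positivity
    have hex : ∀ i : ι, ∃ q : ℚ, |b.repr x i - q| < δ := fun i => exists_rat_near _ hδ0
    choose q hq using hex
    set s₀ : E := ∑ i, (q i : ℝ) • b i with hs₀
    have hgs₀ : g s₀ = 0 := by
      have h := map_sum G (fun i => (q i : ℝ) • b i) Finset.univ
      rw [hGg] at h
      rw [hs₀, h]
      refine Finset.sum_eq_zero fun i _ => ?_
      rw [hGg, hrat]
    have hdist : dist s₀ x < r := by
      rw [dist_eq_norm]
      have hxs : s₀ - x = ∑ i, ((q i : ℝ) - b.repr x i) • b i := by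
        conv_lhs => rw [← b.sum_repr x]
        rw [← Finset.sum_sub_distrib]
        refine Finset.sum_congr rfl fun i _ => ?_
        rw [sub_smul]
      rw [hxs]
      calc ‖∑ i, ((q i : ℝ) - b.repr x i) • b i‖
          ≤ ∑ i, ‖((q i : ℝ) - b.repr x i) • b i‖ := norm_sum_le _ _
        _ ≤ ∑ i, δ * ‖b i‖ := by
            refine Finset.sum_le_sum fun i _ => ?_
            rw [norm_smul, Real.norm_eq_abs, abs_sub_comm]
            exact mul_le_mul_of_nonneg_right (hq i).le (norm_nonneg _)
        _ = δ * M := by rw [hM, Finset.mul_sum]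
        _ < δ * (M + 1) := by nlinarith
        _ = r := by
            rw [hδ]
            field_simp
    exact ⟨s₀, Metric.mem_ball.2 hdist, hgs₀⟩
  -- χ ≡ 1
  have hχ1 : ∀ y, χ y = 1 := by
    have h : χ = fun _ : E => (1 : ℂ) := Continuous.ext_on hdense hχcont continuous_const
      (fun y hy => by
        simp only [Set.mem_setOf_eq] at hy
        simp [hχ, hy])
    exact fun y => congrFun h y
  -- each g x is a multiple of 2π
  have hmul2 : ∀ x : E, ∃ m : ℤ, g x = m * (2 * Real.pi) := by
    intro x
    have h := hχ1 x
    rw [hχ] at h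
    rw [Complex.exp_eq_one_iff] at h
    obtain ⟨m, hm⟩ := h
    refine ⟨m, ?_⟩
    have hI : (g x : ℂ) * Complex.I = ((m : ℂ) * (2 * Real.pi)) * Complex.I := by
      rw [← mul_comm Complex.I]
      rw [hm]
      ring
    have h2 : (g x : ℂ) = (m : ℂ) * (2 * Real.pi) :=
      mul_right_cancel₀ Complex.I_ne_zero hI
    exact_mod_cast h2
  -- conclude
  intro x
  by_contra hne
  obtain ⟨N, hN⟩ := exists_nat_gt (|g x| / (2 * Real.pi))
  have hNpos : 0 < N := by
    rcases Nat.eq_zero_or_pos N with h | h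
    · exfalso
      rw [h] at hN
      have h1 : 0 < |g x| := abs_pos.mpr hne
      have h2 : 0 < 2 * Real.pi := by positivity
      rw [Nat.cast_zero, div_lt_iff₀ h2, zero_mul] at hN
      linarith
    · exact h
  have hNR : (N : ℝ) ≠ 0 := Nat.cast_ne_zero.mpr hNpos.ne'
  set y : E := (N : ℝ)⁻¹ • x with hy
  have hxy : x = N • y := by
    rw [hy, ← Nat.cast_smul_eq_nsmul ℝ, smul_inv_smul₀ hNR]
  have hgx : g x = N * g y := by
    conv_lhs => rw [hxy]
    have h := map_nsmul G N y
    rw [hGg, hGg, nsmul_eq_mul] at h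
    exact h
  obtain ⟨m, hm⟩ := hmul2 y
  have hπ : 0 < 2 * Real.pi := by positivity
  have habs : |g x| < N * (2 * Real.pi) := by
    rw [div_lt_iff₀ hπ] at hN
    exact hN
  have hm0 : m = 0 := by
    by_contra hm0
    have h1 : (1 : ℝ) ≤ |(m : ℝ)| := by
      have := Int.one_le_abs hm0
      exact_mod_cast this
    rw [hgx, hm, abs_mul, abs_mul, abs_of_pos hπ,
      abs_of_nonneg (by positivity : (0:ℝ) ≤ (N:ℝ))] at habs
    have h2 : (0:ℝ) < N := by exact_mod_cast hNpos
    have h3 : (N:ℝ) * (2 * Real.pi) ≤ (N:ℝ) * (|(m:ℝ)| * (2 * Real.pi)) := by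
      have h4 : (1:ℝ) * (2 * Real.pi) ≤ |(m:ℝ)| * (2 * Real.pi) :=
        mul_le_mul_of_nonneg_right h1 hπ.le
      have h5 := mul_le_mul_of_nonneg_left h4 h2.le
      linarith
    linarith
  rw [hm0] at hm
  rw [Int.cast_zero, zero_mul] at hm
  exact hne (by rw [hgx, hm, mul_zero])

theorem stmt_7 (n : ℕ) (b : Module.Basis (Fin n) ℝ (EuclideanSpace ℝ (Fin n)))
    (g : EuclideanSpace ℝ (Fin n) → ℝ)
    (hg : ∀ x y, g (x + y) = g x + g y)
    (hper : ∀ (x : EuclideanSpace ℝ (Fin n)) (k : Fin n), g (x + b k) = g x)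
    (hmeas : AEMeasurable (fun x => Complex.exp (Complex.I * (g x : ℂ)))
      (volume.restrict (parallelepiped ⇑b))) :
    ∀ x, g x = 0 :=
  stmt_7_aux b volume g hg hper hmeas
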